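/- arXiv:1505.02267 — 2 statements merged into one kernel-verified Lean document; each statement's English description precedes it below -/
import Mathlib

section
/- Let a, b be bounded operators on a complex Hilbert space with polar decomposition b = ν|b|. Then |ab*| = ν ||a||b|| ν* and ν* |ab*| ν = ||a||b||. -/
/-- The absolute value `|y| = (y*y)^{1/2}` of a bounded operator. -/
noncomputable def opAbs {H : Type*} [NormedAddCommGroup H] [InnerProductSpace ℂ H]
    [CompleteSpace H] (y : H →L[ℂ] H) : H →L[ℂ] H := CFC.sqrt (star y * y)

/-- The `k`-th eigenvalue (in decreasing order, with multiplicity) of a positive compact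
operator, via the Courant–Fischer min-max characterization. -/
noncomputable def sval {H : Type*} [NormedAddCommGroup H] [InnerProductSpace ℂ H]
    [CompleteSpace H] (x : H →L[ℂ] H) (k : ℕ) : ℝ :=
  ⨅ F : {F : Submodule ℂ H // Module.finrank ℂ F = k},
    ⨆ ξ : {ξ : H // ξ ∈ (F : Submodule ℂ H)ᗮ ∧ ‖ξ‖ = 1},
      (inner ℂ (ξ : H) (x ξ) : ℂ).re

variable {H : Type*} [NormedAddCommGroup H] [InnerProductSpace ℂ H] [CompleteSpace H]

set_option maxHeartbeats 1000000 in
set_option synthInstance.maxHeartbeats 400000 in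
theorem abs_mul_star (a b ν : H →L[ℂ] H) (hpolar : b = ν * opAbs b)
    (hinit : star ν * ν =
      ((LinearMap.range (opAbs b : H →ₗ[ℂ] H)).topologicalClosure).subtypeL.comp
        (Submodule.orthogonalProjectionOnto ((LinearMap.range (opAbs b : H →ₗ[ℂ] H)).topologicalClosure))) :
    opAbs (a * star b) = ν * opAbs (opAbs a * opAbs b) * star ν ∧
      star ν * opAbs (a * star b) * ν = opAbs (opAbs a * opAbs b) := by
  set K := (LinearMap.range (opAbs b : H →ₗ[ℂ] H)).topologicalClosure with hK
  set p : H →L[ℂ] H := star ν * ν with hp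
  set B := opAbs b with hB
  set A' := opAbs a with hA
  set c := opAbs (A' * B) with hc
  have hBnn : (0 : H →L[ℂ] H) ≤ B := CFC.sqrt_nonneg _
  have hAnn : (0 : H →L[ℂ] H) ≤ A' := CFC.sqrt_nonneg _
  have hcnn : (0 : H →L[ℂ] H) ≤ c := CFC.sqrt_nonneg _
  have hBsa : IsSelfAdjoint B := .of_nonneg hBnn
  have hAsa : IsSelfAdjoint A' := .of_nonneg hAnn
  have hcsa : IsSelfAdjoint c := .of_nonneg hcnn
  have hpsa : IsSelfAdjoint p := by
    simp [hp, IsSelfAdjoint, star_mul]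
  have hpK : ∀ x : H, x ∈ K → p x = x := by
    intro x hx
    rw [hinit]
    simp only [ContinuousLinearMap.comp_apply, Submodule.subtypeL_apply]
    exact Submodule.starProjection_eq_self_iff.mpr hx
  have hpB : p * B = B := by
    ext ξ
    exact hpK (B ξ) (Submodule.le_topologicalClosure _ ⟨ξ, rfl⟩)
  have hpp : p * p = p := by
    ext ξ
    have hmem : p ξ ∈ K := by
      rw [hinit]; exact SetLike.coe_mem _
    exact hpK _ hmem
  have hBp : B * p = B := by
    have := congrArg star hpB
    rwa [star_mul, hpsa.star_eq, hBsa.star_eq] at this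
  have hA2 : A' * A' = star a * a := CFC.sqrt_mul_sqrt_self _ (star_mul_self_nonneg a)
  have hc2 : c * c = B * (star a * a) * B := by
    have h1 : c * c = star (A' * B) * (A' * B) :=
      CFC.sqrt_mul_sqrt_self _ (star_mul_self_nonneg _)
    rw [h1, star_mul, hBsa.star_eq, hAsa.star_eq, ← hA2]
    noncomm_ring
  have hpc2 : p * (c * c) = c * c := by
    rw [hc2, ← mul_assoc, ← mul_assoc, hpB]
  have hpc : p * c = c := by
    have hz : ((1 : H →L[ℂ] H) - p) * (c * c) = 0 := by
      rw [sub_mul, one_mul, hpc2, sub_self]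
    have hq : ((1 : H →L[ℂ] H) - p) * c * (c * ((1 : H →L[ℂ] H) - p)) = 0 := by
      calc ((1 : H →L[ℂ] H) - p) * c * (c * ((1 : H →L[ℂ] H) - p))
          = (((1 : H →L[ℂ] H) - p) * (c * c)) * ((1 : H →L[ℂ] H) - p) := by noncomm_ring
        _ = 0 := by rw [hz, zero_mul]
    have hstar : star (((1 : H →L[ℂ] H) - p) * c) = c * ((1 : H →L[ℂ] H) - p) := by
      rw [star_mul, hcsa.star_eq, star_sub, star_one, hpsa.star_eq]
    have hx : ((1 : H →L[ℂ] H) - p) * c = 0 := by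
      have hnorm : ‖((1 : H →L[ℂ] H) - p) * c‖ * ‖((1 : H →L[ℂ] H) - p) * c‖ = 0 := by
        rw [← CStarRing.norm_self_mul_star (x := ((1 : H →L[ℂ] H) - p) * c), hstar, hq,
          norm_zero]
      exact norm_eq_zero.mp (mul_self_eq_zero.mp hnorm)
    rw [sub_mul, one_mul] at hx
    exact (sub_eq_zero.mp hx).symm
  have hcp : c * p = c := by
    have := congrArg star hpc
    rwa [star_mul, hpsa.star_eq, hcsa.star_eq] at this
  set d := ν * c * star ν with hd
  have hdnn : (0 : H →L[ℂ] H) ≤ d := star_right_conjugate_nonneg hcnn ν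
  have hbstar : star b = B * star ν := by
    rw [hpolar, star_mul, hBsa.star_eq]
  have hdsq : d * d = star (a * star b) * (a * star b) := by
    have h1 : d * d = ν * (c * p * c) * star ν := by
      rw [hd, hp]; noncomm_ring
    rw [h1, hcp, hc2, star_mul, star_star, hbstar, hpolar]
    noncomm_ring
  have habs : opAbs (a * star b) = d := CFC.sqrt_unique hdsq hdnn
  refine ⟨by rw [habs, hd], ?_⟩
  rw [habs, hd]
  calc star ν * (ν * c * star ν) * ν = p * c * p := by rw [hp]; noncomm_ring
    _ = c := by rw [hpc, hcp]
end

section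
/- For compact operators a, b on a Hilbert space and each k, the k-th singular value of ab* equals the k-th singular value of |a||b|, i.e. λ_k(|ab*|) = λ_k(||a||b||). -/
variable {H : Type*} [NormedAddCommGroup H] [InnerProductSpace ℂ H] [CompleteSpace H]

set_option linter.unusedSectionVars false
set_option maxHeartbeats 1000000
set_option synthInstance.maxHeartbeats 400000

open Module

namespace SvalAux

/-- The Rayleigh sup over the orthocomplement of `F`. -/
noncomputable def ray (x : H →L[ℂ] H) (F : Submodule ℂ H) : ℝ :=
  ⨆ ξ : {ξ : H // ξ ∈ (F : Submodule ℂ H)ᗮ ∧ ‖ξ‖ = 1}, (inner ℂ (ξ : H) (x ξ) : ℂ).re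

lemma abs_ray_term_le (x : H →L[ℂ] H) (F : Submodule ℂ H)
    (ξ : {ξ : H // ξ ∈ (F : Submodule ℂ H)ᗮ ∧ ‖ξ‖ = 1}) :
    |(inner ℂ (ξ : H) (x ξ) : ℂ).re| ≤ ‖x‖ := by
  obtain ⟨ξ, hmem, hn⟩ := ξ
  calc |(inner ℂ ξ (x ξ) : ℂ).re| ≤ ‖(inner ℂ ξ (x ξ) : ℂ)‖ := Complex.abs_re_le_norm _
    _ ≤ ‖ξ‖ * ‖x ξ‖ := norm_inner_le_norm _ _
    _ ≤ ‖ξ‖ * (‖x‖ * ‖ξ‖) := by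
        gcongr; exact x.le_opNorm ξ
    _ = ‖x‖ := by rw [hn]; ring

lemma ray_bddAbove (x : H →L[ℂ] H) (F : Submodule ℂ H) :
    BddAbove (Set.range fun ξ : {ξ : H // ξ ∈ (F : Submodule ℂ H)ᗮ ∧ ‖ξ‖ = 1} =>
      (inner ℂ (ξ : H) (x ξ) : ℂ).re) := by
  refine ⟨‖x‖, ?_⟩
  rintro r ⟨ξ, rfl⟩
  exact (abs_le.mp (abs_ray_term_le x F ξ)).2

lemma ray_nonneg {x : H →L[ℂ] H} (hx : 0 ≤ x) (F : Submodule ℂ H) : 0 ≤ ray x F := by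
  rcases isEmpty_or_nonempty {ξ : H // ξ ∈ (F : Submodule ℂ H)ᗮ ∧ ‖ξ‖ = 1} with h | h
  · rw [ray, Real.iSup_of_isEmpty]
  · obtain ⟨ξ⟩ := h
    refine le_trans ?_ (le_ciSup (ray_bddAbove x F) ξ)
    have := ((ContinuousLinearMap.nonneg_iff_isPositive x).mp hx).inner_nonneg_right (ξ : H)
    exact (Complex.nonneg_iff.mp this).1

lemma sval_eq_iInf_ray (x : H →L[ℂ] H) (k : ℕ) :
    sval x k = ⨅ F : {F : Submodule ℂ H // Module.finrank ℂ F = k}, ray x (F : Submodule ℂ H) :=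
  rfl

noncomputable def sval' (x : H →L[ℂ] H) (k : ℕ) : ℝ :=
  ⨅ F : {F : Submodule ℂ H // Module.finrank ℂ F = k}, ray x (F : Submodule ℂ H)

lemma exists_finrank_eq_of_le (k : ℕ) (U : Submodule ℂ H) (hU : finrank ℂ U = k)
    (W : Submodule ℂ H) [FiniteDimensional ℂ W] (hW : finrank ℂ W ≤ k) :
    ∃ W', W ≤ W' ∧ finrank ℂ W' = k := by
  obtain ⟨n, hn⟩ : ∃ n, k - finrank ℂ W = n := ⟨_, rfl⟩
  induction n generalizing W with
  | zero => exact ⟨W, le_rfl, le_antisymm hW (Nat.le_of_sub_eq_zero hn)⟩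
  | succ n ih =>
    have hlt : finrank ℂ W < k := by omega
    have hUW : ¬ (U ≤ W) := by
      intro hle
      have : finrank ℂ U ≤ finrank ℂ W :=
        LinearMap.finrank_le_finrank_of_injective
          (Submodule.inclusion_injective hle)
      omega
    obtain ⟨x, hxU, hxW⟩ := SetLike.not_le_iff_exists.mp hUW
    have hx0 : x ≠ 0 := fun h => hxW (h ▸ W.zero_mem)
    have hinf : W ⊓ Submodule.span ℂ {x} = ⊥ := by
      rw [Submodule.eq_bot_iff]
      rintro y ⟨hyW, hyS⟩
      obtain ⟨c, rfl⟩ := Submodule.mem_span_singleton.mp hyS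
      rcases eq_or_ne c 0 with rfl | hc
      · simp
      · exact absurd (by simpa [smul_smul, inv_mul_cancel₀ hc] using W.smul_mem c⁻¹ hyW) hxW
    have hrk : finrank ℂ ((W ⊔ Submodule.span ℂ {x} : Submodule ℂ H) : Submodule ℂ H)
        = finrank ℂ W + 1 := by
      have := Submodule.finrank_sup_add_finrank_inf_eq W (Submodule.span ℂ {x})
      rw [hinf, finrank_span_singleton hx0] at this
      simpa using this
    have h1 : finrank ℂ ((W ⊔ Submodule.span ℂ {x} : Submodule ℂ H) : Submodule ℂ H) ≤ k := by
      omega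
    obtain ⟨W', hle, hrank⟩ := ih (W ⊔ Submodule.span ℂ {x}) h1 (by omega)
    exact ⟨W', le_trans le_sup_left hle, hrank⟩

lemma re_inner_nonneg {x : H →L[ℂ] H} (hx : 0 ≤ x) (v : H) :
    0 ≤ (inner ℂ v (x v) : ℂ).re := by
  have := ((ContinuousLinearMap.nonneg_iff_isPositive x).mp hx).inner_nonneg_right v
  exact (Complex.nonneg_iff.mp this).1

lemma ray_conj_le {x : H →L[ℂ] H} (hx : 0 ≤ x) (w : H →L[ℂ] H) (hw : ‖w‖ ≤ 1)
    {F F' : Submodule ℂ H} (hmap : F.map (w : H →ₗ[ℂ] H) ≤ F') :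
    ray (w * x * star w) F' ≤ ray x F := by
  rcases isEmpty_or_nonempty {ξ : H // ξ ∈ (F' : Submodule ℂ H)ᗮ ∧ ‖ξ‖ = 1} with h | h
  · rw [ray, Real.iSup_of_isEmpty]
    exact ray_nonneg hx F
  refine ciSup_le fun ⟨ξ, hξF', hξn⟩ => ?_
  set η : H := (star w) ξ with hη
  have hterm : (inner ℂ ξ ((w * x * star w) ξ) : ℂ) = inner ℂ η (x η) := by
    show (inner ℂ ξ (w (x ((star w) ξ))) : ℂ) = _
    rw [ContinuousLinearMap.star_eq_adjoint, ← ContinuousLinearMap.adjoint_inner_left]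
    rfl
  have hηF : η ∈ (F : Submodule ℂ H)ᗮ := by
    rw [Submodule.mem_orthogonal]
    intro u hu
    have h1 : (inner ℂ ξ (w u) : ℂ) = 0 := by
      have hwu : w u ∈ F' := hmap ⟨u, hu, rfl⟩
      exact (Submodule.mem_orthogonal' _ _).mp hξF' _ hwu
    have h2 : (inner ℂ η u : ℂ) = 0 := by
      rw [hη, ContinuousLinearMap.star_eq_adjoint, ContinuousLinearMap.adjoint_inner_left, h1]
    rw [← inner_conj_symm, h2, map_zero]
  rcases eq_or_ne η 0 with h0 | h0
  · rw [hterm, h0]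
    simpa using ray_nonneg hx F
  · set r : ℝ := ‖η‖ with hr
    have hr0 : 0 < r := norm_pos_iff.mpr h0
    set ηh : H := ((r : ℂ))⁻¹ • η with hηh
    have hηhn : ‖ηh‖ = 1 := by
      rw [hηh, norm_smul, norm_inv, Complex.norm_real, Real.norm_eq_abs, abs_of_pos hr0,
        inv_mul_cancel₀ hr0.ne']
    have hηhF : ηh ∈ (F : Submodule ℂ H)ᗮ := Submodule.smul_mem _ _ hηF
    have hdecomp : η = (r : ℂ) • ηh := by
      rw [hηh, smul_smul, mul_inv_cancel₀ (Complex.ofReal_ne_zero.mpr hr0.ne'), one_smul]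
    have hre : (inner ℂ η (x η) : ℂ).re = r ^ 2 * (inner ℂ ηh (x ηh) : ℂ).re := by
      have h1 : (inner ℂ η (x η) : ℂ) = ((r * r : ℝ) : ℂ) * inner ℂ ηh (x ηh) := by
        conv_lhs => rw [hdecomp]
        rw [map_smul, inner_smul_left, inner_smul_right, Complex.conj_ofReal]
        push_cast
        ring
      rw [h1, Complex.re_ofReal_mul]
      ring
    have hrle : r ≤ 1 := by
      calc r = ‖(star w) ξ‖ := rfl
        _ ≤ ‖star w‖ * ‖ξ‖ := (star w).le_opNorm ξ
        _ ≤ 1 := by rw [norm_star, hξn, mul_one]; exact hw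
    have hb : (inner ℂ ηh (x ηh) : ℂ).re ≤ ray x F :=
      le_ciSup (ray_bddAbove x F) (⟨ηh, hηhF, hηhn⟩ :
        {ξ : H // ξ ∈ (F : Submodule ℂ H)ᗮ ∧ ‖ξ‖ = 1})
    have hpos : 0 ≤ (inner ℂ ηh (x ηh) : ℂ).re := re_inner_nonneg hx ηh
    rw [hterm, hre]
    have hr2 : r ^ 2 ≤ 1 := by nlinarith
    have step1 : r ^ 2 * (inner ℂ ηh (x ηh) : ℂ).re ≤ 1 * (inner ℂ ηh (x ηh) : ℂ).re :=
      mul_le_mul_of_nonneg_right hr2 hpos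
    linarith

lemma ray_bddBelow_range {x : H →L[ℂ] H} (hx : 0 ≤ x) (k : ℕ) :
    BddBelow (Set.range fun F : {F : Submodule ℂ H // Module.finrank ℂ F = k} =>
      ray x (F : Submodule ℂ H)) := by
  refine ⟨0, ?_⟩
  rintro r ⟨F, rfl⟩
  exact ray_nonneg hx _

lemma sval'_conj_le {x : H →L[ℂ] H} (hx : 0 ≤ x) (w : H →L[ℂ] H) (hw : ‖w‖ ≤ 1) (k : ℕ) :
    sval' (w * x * star w) k ≤ sval' x k := by
  have hwx : 0 ≤ w * x * star w := star_right_conjugate_nonneg hx w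
  rcases isEmpty_or_nonempty {F : Submodule ℂ H // Module.finrank ℂ F = k} with h | h
  · rw [sval', sval', Real.iInf_of_isEmpty, Real.iInf_of_isEmpty]
  refine le_ciInf fun ⟨F, hF⟩ => ?_
  have hexists : ∃ F' : Submodule ℂ H, F.map (w : H →ₗ[ℂ] H) ≤ F' ∧ finrank ℂ F' = k := by
    by_cases hfdF : FiniteDimensional ℂ F
    · have hfd : FiniteDimensional ℂ (F.map (w : H →ₗ[ℂ] H)) :=
        Module.Finite.map F (w : H →ₗ[ℂ] H)
      have hle : finrank ℂ (F.map (w : H →ₗ[ℂ] H)) ≤ k := hF ▸ Submodule.finrank_map_le _ F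
      obtain ⟨F', h1, h2⟩ := exists_finrank_eq_of_le k F hF (F.map (w : H →ₗ[ℂ] H)) hle
      exact ⟨F', h1, h2⟩
    · have hk : k = 0 := by
        rw [← hF, Module.finrank_of_not_finite (by simpa using hfdF)]
      have htop : ¬ FiniteDimensional ℂ H := by
        intro hH
        exact hfdF inferInstance
      refine ⟨⊤, le_top, ?_⟩
      rw [finrank_top, Module.finrank_of_not_finite (by simpa using htop), hk]
  obtain ⟨F', hmap, hF'⟩ := hexists
  exact ciInf_le_of_le (ray_bddBelow_range hwx k) ⟨F', hF'⟩ (ray_conj_le hx w hw hmap)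

lemma sval'_le_add {x y : H →L[ℂ] H} (hx : 0 ≤ x) (hy : 0 ≤ y) (k : ℕ) :
    sval' x k ≤ sval' y k + ‖x - y‖ := by
  rcases isEmpty_or_nonempty {F : Submodule ℂ H // Module.finrank ℂ F = k} with h | h
  · rw [sval', sval', Real.iInf_of_isEmpty, Real.iInf_of_isEmpty]
    simpa using norm_nonneg (x - y)
  have hray : ∀ F : Submodule ℂ H, ray x F ≤ ray y F + ‖x - y‖ := by
    intro F
    rcases isEmpty_or_nonempty {ξ : H // ξ ∈ (F : Submodule ℂ H)ᗮ ∧ ‖ξ‖ = 1} with h2 | h2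
    · rw [ray, ray, Real.iSup_of_isEmpty, Real.iSup_of_isEmpty]
      simpa using norm_nonneg (x - y)
    refine ciSup_le fun ξ => ?_
    have hsplit : (inner ℂ (ξ : H) (x ξ) : ℂ).re
        = (inner ℂ (ξ : H) (y ξ) : ℂ).re + (inner ℂ (ξ : H) ((x - y) ξ) : ℂ).re := by
      rw [ContinuousLinearMap.sub_apply, inner_sub_right]
      simp
    rw [hsplit]
    have h1 : (inner ℂ (ξ : H) (y ξ) : ℂ).re ≤ ray y F := le_ciSup (ray_bddAbove y F) ξ
    have h2 := (abs_le.mp (abs_ray_term_le (x - y) F ξ)).2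
    linarith
  have : ∀ F : {F : Submodule ℂ H // Module.finrank ℂ F = k},
      sval' x k - ‖x - y‖ ≤ ray y (F : Submodule ℂ H) := by
    intro F
    have h4 : sval' x k ≤ ray x (F : Submodule ℂ H) :=
      ciInf_le (ray_bddBelow_range hx k) F
    have h5 := hray (F : Submodule ℂ H)
    linarith
  have h3 : sval' x k - ‖x - y‖ ≤ sval' y k := le_ciInf this
  linarith

section Nontrivial
variable [Nontrivial H]

lemma isSelfAdjoint_of_nonneg {X : H →L[ℂ] H} (hX : 0 ≤ X) : IsSelfAdjoint X :=
  IsSelfAdjoint.of_nonneg hX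

lemma spectrum_subset_Icc {X : H →L[ℂ] H} (hX : 0 ≤ X) {M : ℝ} (hM : ‖X‖ ≤ M) :
    spectrum ℝ X ⊆ Set.Icc 0 M := by
  intro t ht
  refine ⟨spectrum_nonneg_of_nonneg hX ht, ?_⟩
  calc t ≤ |t| := le_abs_self t
    _ = ‖t‖ := rfl
    _ ≤ ‖X‖ := spectrum.norm_le_norm_of_mem ht
    _ ≤ M := hM

lemma sqrt_eq_cfc {X : H →L[ℂ] H} (hX : 0 ≤ X) : CFC.sqrt X = cfc Real.sqrt X := by
  have hsa : IsSelfAdjoint X := IsSelfAdjoint.of_nonneg hX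
  refine (CFC.sqrt_unique ?_ ?_).symm.symm
  · rw [← cfc_mul Real.sqrt Real.sqrt X]
    have : spectrum ℝ X ⊆ Set.Ici 0 := fun t ht => spectrum_nonneg_of_nonneg hX ht
    calc cfc (fun t => Real.sqrt t * Real.sqrt t) X = cfc (id : ℝ → ℝ) X := by
          apply cfc_congr
          intro t ht
          exact Real.mul_self_sqrt (this ht)
      _ = X := cfc_id ℝ X
  · exact cfc_nonneg fun t ht => Real.sqrt_nonneg t

lemma pow_intertwine (c : H →L[ℂ] H) (n : ℕ) :
    c * (star c * c) ^ n = (c * star c) ^ n * c := by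
  induction n with
  | zero => simp
  | succ n ih =>
    calc c * (star c * c) ^ (n + 1) = (c * (star c * c) ^ n) * (star c * c) := by
          rw [pow_succ, ← mul_assoc]
      _ = (c * star c) ^ n * (c * (star c * c)) := by rw [ih, mul_assoc]
      _ = (c * star c) ^ (n + 1) * c := by rw [pow_succ]; noncomm_ring
lemma aeval_intertwine (c : H →L[ℂ] H) (p : Polynomial ℝ) :
    c * (Polynomial.aeval (star c * c) p) = (Polynomial.aeval (c * star c) p) * c := by
  induction p using Polynomial.induction_on' with
  | add p q hp hq => simp [map_add, mul_add, add_mul, hp, hq]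
  | monomial n r =>
    rw [Polynomial.aeval_monomial, Polynomial.aeval_monomial]
    calc c * (algebraMap ℝ (H →L[ℂ] H) r * (star c * c) ^ n)
        = algebraMap ℝ (H →L[ℂ] H) r * (c * (star c * c) ^ n) := by
          rw [← mul_assoc, ← Algebra.commutes r c, mul_assoc]
      _ = algebraMap ℝ (H →L[ℂ] H) r * ((c * star c) ^ n * c) := by rw [pow_intertwine]
      _ = algebraMap ℝ (H →L[ℂ] H) r * (c * star c) ^ n * c := by rw [mul_assoc]

lemma cfc_intertwine (c : H →L[ℂ] H) (f : ℝ → ℝ) (hf : Continuous f) :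
    c * cfc f (star c * c) = cfc f (c * star c) * c := by
  set X := star c * c with hXdef
  set Y := c * star c with hYdef
  have hX : (0 : H →L[ℂ] H) ≤ X := star_mul_self_nonneg c
  have hY : (0 : H →L[ℂ] H) ≤ Y := mul_star_self_nonneg c
  have hXsa : IsSelfAdjoint X := IsSelfAdjoint.of_nonneg hX
  have hYsa : IsSelfAdjoint Y := IsSelfAdjoint.of_nonneg hY
  set M : ℝ := max ‖X‖ ‖Y‖ with hMdef
  have hsX : spectrum ℝ X ⊆ Set.Icc 0 M := spectrum_subset_Icc hX (le_max_left _ _)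
  have hsY : spectrum ℝ Y ⊆ Set.Icc 0 M := spectrum_subset_Icc hY (le_max_right _ _)
  have key : ∀ ε : ℝ, 0 < ε → ‖c * cfc f X - cfc f Y * c‖ ≤ 2 * ‖c‖ * ε := by
    intro ε hε
    obtain ⟨p, hp⟩ := exists_polynomial_near_of_continuousOn 0 M f hf.continuousOn ε hε
    have h0 : c * cfc (fun t => p.eval t) X = cfc (fun t => p.eval t) Y * c := by
      rw [cfc_polynomial p X hXsa, cfc_polynomial p Y hYsa]
      exact aeval_intertwine c p
    have hnX : ‖cfc f X - cfc (fun t => p.eval t) X‖ ≤ ε := by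
      rw [← cfc_sub f (fun t => p.eval t) X hf.continuousOn (Polynomial.continuousOn p)]
      refine norm_cfc_le hε.le fun t ht => ?_
      have := hp t (hsX ht)
      rw [Real.norm_eq_abs, abs_sub_comm]
      exact this.le
    have hnY : ‖cfc (fun t => p.eval t) Y - cfc f Y‖ ≤ ε := by
      rw [← cfc_sub (fun t => p.eval t) f Y (Polynomial.continuousOn p) hf.continuousOn]
      refine norm_cfc_le hε.le fun t ht => ?_
      have := hp t (hsY ht)
      rw [Real.norm_eq_abs]
      exact this.le
    have hD : c * cfc f X - cfc f Y * c
        = c * (cfc f X - cfc (fun t => p.eval t) X)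
          + (cfc (fun t => p.eval t) Y - cfc f Y) * c := by
      rw [mul_sub, sub_mul, h0]; abel
    calc ‖c * cfc f X - cfc f Y * c‖
        ≤ ‖c * (cfc f X - cfc (fun t => p.eval t) X)‖
          + ‖(cfc (fun t => p.eval t) Y - cfc f Y) * c‖ := by rw [hD]; exact norm_add_le _ _
      _ ≤ ‖c‖ * ε + ε * ‖c‖ := by
          refine add_le_add ?_ ?_
          · exact le_trans (norm_mul_le _ _) (by gcongr)
          · exact le_trans (norm_mul_le _ _) (by gcongr)
      _ = 2 * ‖c‖ * ε := by ring
  have hnorm : ‖c * cfc f X - cfc f Y * c‖ ≤ 0 := by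
    refine le_of_forall_pos_le_add fun ε' hε' => ?_
    have h2 := key (ε' / (2 * ‖c‖ + 1)) (by positivity)
    calc ‖c * cfc f X - cfc f Y * c‖ ≤ 2 * ‖c‖ * (ε' / (2 * ‖c‖ + 1)) := h2
      _ ≤ ε' := by
          rw [div_eq_inv_mul, ← mul_assoc]
          have hc : (0:ℝ) ≤ 2 * ‖c‖ := by positivity
          have : 2 * ‖c‖ * (2 * ‖c‖ + 1)⁻¹ ≤ 1 := by
            rw [mul_inv_le_iff₀ (by positivity)]
            linarith
          nlinarith [hε'.le]
      _ ≤ 0 + ε' := by linarith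
  have := le_antisymm hnorm (norm_nonneg _)
  rw [norm_eq_zero, sub_eq_zero] at this
  exact this

lemma spectrum_nonneg' {X : H →L[ℂ] H} (hX : 0 ≤ X) : ∀ t ∈ spectrum ℝ X, 0 ≤ t :=
  fun _ ht => spectrum_nonneg_of_nonneg hX ht

section eps

variable (c : H →L[ℂ] H) {ε : ℝ} (hε : 0 < ε)

lemma conj_key (c : H →L[ℂ] H) {ε : ℝ} (hε : 0 < ε) :
    ∃ w : H →L[ℂ] H, ‖w‖ ≤ 1 ∧
      w * cfc Real.sqrt (star c * c) * star w
        = cfc (fun t : ℝ => Real.sqrt t * ((t + ε)⁻¹ * t)) (c * star c) := by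
  set X := star c * c with hXdef
  set Y := c * star c with hYdef
  have hX : (0 : H →L[ℂ] H) ≤ X := star_mul_self_nonneg c
  have hY : (0 : H →L[ℂ] H) ≤ Y := mul_star_self_nonneg c
  have hXsa : IsSelfAdjoint X := IsSelfAdjoint.of_nonneg hX
  have hYsa : IsSelfAdjoint Y := IsSelfAdjoint.of_nonneg hY
  have hXs := spectrum_nonneg' hX
  have hYs := spectrum_nonneg' hY
  set gε : ℝ → ℝ := fun t => (Real.sqrt (t + ε))⁻¹ with hgdef
  set rε : ℝ → ℝ := fun t => (t + ε)⁻¹ with hrdef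
  have hg_cont : ContinuousOn gε (Set.Ici 0) := by
    apply ContinuousOn.inv₀
    · exact (Real.continuous_sqrt.comp (continuous_add_right ε)).continuousOn
    · intro t ht
      have : 0 < t + ε := by simp at ht; linarith
      positivity
  have hr_cont : ContinuousOn rε (Set.Ici 0) := by
    apply ContinuousOn.inv₀ (continuous_add_right ε).continuousOn
    intro t ht
    have : 0 < t + ε := by simp at ht; linarith
    exact this.ne'
  have hXIci : spectrum ℝ X ⊆ Set.Ici 0 := fun t ht => hXs t ht
  have hYIci : spectrum ℝ Y ⊆ Set.Ici 0 := fun t ht => hYs t ht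
  have hgX : ContinuousOn gε (spectrum ℝ X) := hg_cont.mono hXIci
  have hrX : ContinuousOn rε (spectrum ℝ X) := hr_cont.mono hXIci
  have hrY : ContinuousOn rε (spectrum ℝ Y) := hr_cont.mono hYIci
  set P : H →L[ℂ] H := cfc gε X with hPdef
  set R : H →L[ℂ] H := cfc rε X with hRdef
  set S : H →L[ℂ] H := cfc rε Y with hSdef
  have hP_nonneg : (0 : H →L[ℂ] H) ≤ P := cfc_nonneg fun t _ => by positivity
  have hP_sa : IsSelfAdjoint P := IsSelfAdjoint.of_nonneg hP_nonneg
  refine ⟨c * P, ?_, ?_⟩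
  · -- norm bound
    have hsw : star (c * P) = P * star c := by
      rw [star_mul, hP_sa.star_eq]
    have hPXP : star (c * P) * (c * P) = P * X * P := by
      rw [hsw, mul_assoc, ← mul_assoc (star c) c P, ← hXdef, ← mul_assoc]
    have h1 : P * X = cfc (fun t => gε t * t) X := by
      conv_lhs => rw [show X = cfc (id : ℝ → ℝ) X from (cfc_id ℝ X hXsa).symm]
      rw [hPdef, ← cfc_mul gε id X hgX (continuousOn_id)]
      simp only [id_eq]
    have h2 : P * X * P = cfc (fun t => gε t * t * gε t) X := by
      rw [h1, hPdef, ← cfc_mul _ gε X (by fun_prop (disch := assumption)) hgX]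
    have hb : ‖star (c * P) * (c * P)‖ ≤ 1 := by
      rw [hPXP, h2]
      refine norm_cfc_le one_pos.le fun t ht => ?_
      have ht0 : 0 ≤ t := hXs t ht
      have htε : 0 < t + ε := by linarith
      have hgt : gε t * t * gε t = t * (t + ε)⁻¹ := by
        rw [hgdef]
        calc (Real.sqrt (t + ε))⁻¹ * t * (Real.sqrt (t + ε))⁻¹
            = t * (Real.sqrt (t + ε) * Real.sqrt (t + ε))⁻¹ := by rw [mul_inv]; ring
          _ = t * (t + ε)⁻¹ := by rw [Real.mul_self_sqrt htε.le]
      rw [hgt, Real.norm_eq_abs, abs_of_nonneg (by positivity)]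
      rw [mul_inv_le_iff₀ htε]
      linarith
    have := CStarRing.norm_star_mul_self (x := c * P)
    rw [this] at hb
    nlinarith [norm_nonneg (c * P)]
  · -- conjugation identity
    have hsw : star (c * P) = P * star c := by rw [star_mul, hP_sa.star_eq]
    have hmid : P * cfc Real.sqrt X * P = cfc Real.sqrt X * R := by
      have e1 : P * cfc Real.sqrt X = cfc (fun t => gε t * Real.sqrt t) X := by
        rw [hPdef, ← cfc_mul gε Real.sqrt X hgX Real.continuous_sqrt.continuousOn]
      have e2 : cfc (fun t => gε t * Real.sqrt t) X * P
          = cfc (fun t => gε t * Real.sqrt t * gε t) X := by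
        rw [hPdef, ← cfc_mul _ gε X (by fun_prop (disch := assumption)) hgX]
      have e3 : cfc (fun t => gε t * Real.sqrt t * gε t) X
          = cfc (fun t => Real.sqrt t * rε t) X := by
        apply cfc_congr
        intro t ht
        have ht0 : 0 ≤ t := hXs t ht
        have htε : 0 < t + ε := by linarith
        rw [hgdef, hrdef]
        calc (Real.sqrt (t + ε))⁻¹ * Real.sqrt t * (Real.sqrt (t + ε))⁻¹
            = Real.sqrt t * (Real.sqrt (t + ε) * Real.sqrt (t + ε))⁻¹ := by rw [mul_inv]; ring
          _ = Real.sqrt t * (t + ε)⁻¹ := by rw [Real.mul_self_sqrt htε.le]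
      have e4 : cfc (fun t => Real.sqrt t * rε t) X = cfc Real.sqrt X * R := by
        rw [hRdef, cfc_mul Real.sqrt rε X Real.continuous_sqrt.continuousOn hrX]
      rw [e1, e2, e3, e4]
    -- resolvent facts
    have hplus : ∀ (Z : H →L[ℂ] H), IsSelfAdjoint Z → Z + ε • 1 = cfc (fun t : ℝ => t + ε) Z := by
      intro Z hZ
      have h := cfc_add Z (fun t : ℝ => t) (fun _ : ℝ => ε) continuousOn_id continuousOn_const
      rw [h, cfc_id' ℝ Z hZ, cfc_const ε Z hZ, Algebra.algebraMap_eq_smul_one]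
    have hXR : (X + ε • 1) * R = 1 := by
      rw [hplus X hXsa, hRdef, ← cfc_mul _ rε X (by fun_prop) hrX]
      calc cfc (fun t : ℝ => (t + ε) * rε t) X = cfc (fun _ : ℝ => (1:ℝ)) X := by
            apply cfc_congr
            intro t ht
            have ht0 : 0 ≤ t := hXs t ht
            have htε : t + ε ≠ 0 := by positivity
            simp only [hrdef]
            field_simp
        _ = 1 := cfc_const_one ℝ X hXsa
    have hSY : S * (Y + ε • 1) = 1 := by
      rw [hplus Y hYsa, hSdef, ← cfc_mul rε _ Y hrY (by fun_prop)]
      calc cfc (fun t : ℝ => rε t * (t + ε)) Y = cfc (fun _ : ℝ => (1:ℝ)) Y := by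
            apply cfc_congr
            intro t ht
            have ht0 : 0 ≤ t := hYs t ht
            have htε : t + ε ≠ 0 := by positivity
            simp only [hrdef]
            field_simp
        _ = 1 := cfc_const_one ℝ Y hYsa
    have hYc : (Y + ε • 1) * c = c * (X + ε • 1) := by
      rw [add_mul, mul_add, smul_mul_assoc, one_mul, mul_smul_comm, mul_one,
        hYdef, hXdef, mul_assoc]
    have hcR : c * R = S * c := by
      calc c * R = (S * (Y + ε • 1)) * (c * R) := by rw [hSY, one_mul]
        _ = S * (((Y + ε • 1) * c) * R) := by rw [mul_assoc, ← mul_assoc (Y + ε • 1) c R]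
        _ = S * ((c * (X + ε • 1)) * R) := by rw [hYc]
        _ = S * (c * ((X + ε • 1) * R)) := by rw [mul_assoc c]
        _ = S * c := by rw [hXR, mul_one]
    have hcsqrt : c * cfc Real.sqrt X = cfc Real.sqrt Y * c :=
      cfc_intertwine c Real.sqrt Real.continuous_sqrt
    calc (c * P) * cfc Real.sqrt X * star (c * P)
        = c * (P * cfc Real.sqrt X * P) * star c := by
          rw [hsw]
          noncomm_ring
      _ = c * (cfc Real.sqrt X * R) * star c := by rw [hmid]
      _ = (c * cfc Real.sqrt X) * R * star c := by noncomm_ring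
      _ = cfc Real.sqrt Y * (c * R) * star c := by rw [hcsqrt]; noncomm_ring
      _ = cfc Real.sqrt Y * (S * c) * star c := by rw [hcR]
      _ = cfc Real.sqrt Y * S * Y := by rw [hYdef]; noncomm_ring
      _ = cfc (fun t : ℝ => Real.sqrt t * ((t + ε)⁻¹ * t)) Y := by
          have u1 : S * Y = cfc (fun t => rε t * t) Y := by
            conv_lhs => rw [show Y = cfc (id : ℝ → ℝ) Y from (cfc_id ℝ Y hYsa).symm]
            rw [hSdef, ← cfc_mul rε id Y hrY (continuousOn_id)]
            simp only [id_eq]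
          rw [mul_assoc, u1,
            ← cfc_mul Real.sqrt _ Y Real.continuous_sqrt.continuousOn (by fun_prop)]

end eps

lemma phi_contOn {ε : ℝ} (hε : 0 < ε) :
    ContinuousOn (fun t : ℝ => Real.sqrt t * ((t + ε)⁻¹ * t)) (Set.Ici 0) := by
  refine Real.continuous_sqrt.continuousOn.mul (ContinuousOn.mul ?_ continuous_id.continuousOn)
  refine ContinuousOn.inv₀ (continuous_add_right ε).continuousOn fun t ht => ?_
  have : (0:ℝ) ≤ t := ht
  positivity

lemma dist_sqrt_phi {Y : H →L[ℂ] H} (hY : 0 ≤ Y) {ε : ℝ} (hε : 0 < ε) :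
    ‖cfc Real.sqrt Y - cfc (fun t : ℝ => Real.sqrt t * ((t + ε)⁻¹ * t)) Y‖ ≤ Real.sqrt ε := by
  have hYs := spectrum_nonneg' hY
  have hIci : spectrum ℝ Y ⊆ Set.Ici 0 := fun t ht => hYs t ht
  rw [← cfc_sub Real.sqrt _ Y Real.continuous_sqrt.continuousOn ((phi_contOn hε).mono hIci)]
  refine norm_cfc_le (Real.sqrt_nonneg ε) fun t ht => ?_
  have ht0 : 0 ≤ t := hYs t ht
  have htε : 0 < t + ε := by linarith
  have key : Real.sqrt t - Real.sqrt t * ((t + ε)⁻¹ * t) = Real.sqrt t * ε * (t + ε)⁻¹ := by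
    field_simp
    ring
  rw [Real.norm_eq_abs, key, abs_of_nonneg (by positivity)]
  rw [mul_inv_le_iff₀ htε]
  set u := Real.sqrt t with hu
  set v := Real.sqrt ε with hv
  have hu0 : 0 ≤ u := Real.sqrt_nonneg t
  have hv0 : 0 ≤ v := Real.sqrt_nonneg ε
  have hu2 : u ^ 2 = t := Real.sq_sqrt ht0
  have hv2 : v ^ 2 = ε := Real.sq_sqrt hε.le
  have huv : 0 ≤ v * (u ^ 2 - u * v + v ^ 2) :=
    mul_nonneg hv0 (by nlinarith [sq_nonneg (u - v), mul_nonneg hu0 hv0])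
  nlinarith [huv]

lemma sval'_sqrt_le (c : H →L[ℂ] H) (k : ℕ) :
    sval' (cfc Real.sqrt (c * star c)) k ≤ sval' (cfc Real.sqrt (star c * c)) k := by
  refine le_of_forall_pos_le_add fun δ hδ => ?_
  have hε : (0:ℝ) < δ ^ 2 := by positivity
  obtain ⟨w, hw, hconj⟩ := conj_key c hε
  have hX : (0 : H →L[ℂ] H) ≤ star c * c := star_mul_self_nonneg c
  have hY : (0 : H →L[ℂ] H) ≤ c * star c := mul_star_self_nonneg c
  have hsX : (0 : H →L[ℂ] H) ≤ cfc Real.sqrt (star c * c) :=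
    cfc_nonneg fun t _ => Real.sqrt_nonneg t
  have hsY : (0 : H →L[ℂ] H) ≤ cfc Real.sqrt (c * star c) :=
    cfc_nonneg fun t _ => Real.sqrt_nonneg t
  have hN : (0 : H →L[ℂ] H) ≤ w * cfc Real.sqrt (star c * c) * star w :=
    star_right_conjugate_nonneg hsX w
  have h1 := sval'_le_add hsY hN k
  have h2 := sval'_conj_le hsX w hw k
  have h3 : ‖cfc Real.sqrt (c * star c) - w * cfc Real.sqrt (star c * c) * star w‖
      ≤ Real.sqrt (δ ^ 2) := by
    rw [hconj]
    exact dist_sqrt_phi hY hε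
  rw [Real.sqrt_sq hδ.le] at h3
  linarith

lemma sval'_sqrt_eq (c : H →L[ℂ] H) (k : ℕ) :
    sval' (cfc Real.sqrt (star c * c)) k = sval' (cfc Real.sqrt (c * star c)) k := by
  refine le_antisymm ?_ (sval'_sqrt_le c k)
  have := sval'_sqrt_le (star c) k
  rwa [star_star] at this

end Nontrivial

end SvalAux

open SvalAux in
theorem sval_abs_mul_star (a b : H →L[ℂ] H) (ha : IsCompactOperator a)
    (hb : IsCompactOperator b) (k : ℕ) :
    sval (opAbs (a * star b)) k = sval (opAbs (opAbs a * opAbs b)) k := by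
  rcases subsingleton_or_nontrivial H with hH | hH
  · have : Subsingleton (H →L[ℂ] H) := ⟨fun f g => ContinuousLinearMap.ext fun ξ =>
      Subsingleton.elim _ _⟩
    rw [Subsingleton.elim (opAbs (a * star b)) (opAbs (opAbs a * opAbs b))]
  have hsval : ∀ x : H →L[ℂ] H, sval x k = sval' x k := fun _ => rfl
  have habs_sa : ∀ y : H →L[ℂ] H, star (opAbs y) = opAbs y := fun y =>
    (IsSelfAdjoint.of_nonneg (CFC.sqrt_nonneg (a := star y * y))).star_eq
  have habs_sq : ∀ y : H →L[ℂ] H, opAbs y * opAbs y = star y * y := fun y =>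
    CFC.sqrt_mul_sqrt_self _ (star_mul_self_nonneg y)
  set c₁ : H →L[ℂ] H := opAbs a * star b with hc₁
  have hA1 : star (a * star b) * (a * star b) = star c₁ * c₁ := by
    rw [hc₁, star_mul, star_mul, star_star, habs_sa]
    calc b * star a * (a * star b) = b * (star a * a) * star b := by noncomm_ring
      _ = b * (opAbs a * opAbs a) * star b := by rw [habs_sq]
      _ = b * opAbs a * (opAbs a * star b) := by noncomm_ring
  set S : H →L[ℂ] H := opAbs a * opAbs b with hS
  have hA2 : c₁ * star c₁ = S * star S := by
    rw [hc₁, hS, star_mul, star_mul, star_star, habs_sa, habs_sa]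
    calc opAbs a * star b * (b * opAbs a) = opAbs a * (star b * b) * opAbs a := by noncomm_ring
      _ = opAbs a * (opAbs b * opAbs b) * opAbs a := by rw [habs_sq]
      _ = opAbs a * opAbs b * (opAbs b * opAbs a) := by noncomm_ring
  calc sval (opAbs (a * star b)) k
      = sval' (cfc Real.sqrt (star c₁ * c₁)) k := by
        rw [hsval, opAbs, sqrt_eq_cfc (star_mul_self_nonneg _), hA1]
    _ = sval' (cfc Real.sqrt (c₁ * star c₁)) k := sval'_sqrt_eq c₁ k
    _ = sval' (cfc Real.sqrt (star S * S)) k := by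
        rw [hA2, ← sval'_sqrt_eq S k]
    _ = sval (opAbs S) k := by
        rw [hsval, opAbs, sqrt_eq_cfc (star_mul_self_nonneg _)]
end
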